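/- Let H be an inner product space (over ℝ or ℂ) of dimension at least two, let n ≥ 1, and let real coefficients a_B be given for each subset B ⊆ {1,…,n} with 1 ≤ |B| ≤ 2. Then the identity ∑_{B ⊆ {1,…,n}, 1 ≤ |B| ≤ 2} a_B ‖x_B‖² = 0 holds for all vectors x_1, …, x_n ∈ H if and only if a_B = 0 for every subset B ⊆ {1,…,n} with 1 ≤ |B| ≤ 2. -/

import Mathlib

open Finset

section aux

variable {𝕜 H : Type*} [RCLike 𝕜] [NormedAddCommGroup H] [InnerProductSpace 𝕜 H]

lemma my_exists_orthonormal_pair (hdim : 2 ≤ Module.rank 𝕜 H) :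
    ∃ e f : H, ‖e‖ = 1 ∧ ‖f‖ = 1 ∧ (inner 𝕜 e f : 𝕜) = 0 := by
  obtain ⟨v, hv⟩ := exists_linearIndependent_of_le_rank (R := 𝕜) (M := H) (n := 2)
    (by exact_mod_cast hdim)
  have hv0 : v 0 ≠ 0 := hv.ne_zero 0
  set e : H := ((‖v 0‖ : 𝕜))⁻¹ • v 0 with he
  have hne : ‖e‖ = 1 := by
    rw [he, norm_smul, norm_inv, RCLike.norm_ofReal, abs_norm]
    exact inv_mul_cancel₀ (norm_ne_zero_iff.mpr hv0)
  have hee : (inner 𝕜 e e : 𝕜) = 1 := by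
    rw [inner_self_eq_norm_sq_to_K, hne]; norm_num
  set w : H := v 1 - (inner 𝕜 e (v 1) : 𝕜) • e with hw
  have hiw : (inner 𝕜 e w : 𝕜) = 0 := by
    rw [hw, inner_sub_right, inner_smul_right, hee]; ring
  have hwne : w ≠ 0 := by
    intro h0
    obtain ⟨c, hc⟩ : ∃ c : 𝕜, v 1 = c • v 0 := by
      refine ⟨(inner 𝕜 e (v 1) : 𝕜) * (‖v 0‖ : 𝕜)⁻¹, ?_⟩
      have h1 : v 1 = (inner 𝕜 e (v 1) : 𝕜) • e := by rwa [hw, sub_eq_zero] at h0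
      calc v 1 = (inner 𝕜 e (v 1) : 𝕜) • e := h1
        _ = _ := by rw [he, smul_smul]
    have hz : (-c) • v 0 + (1 : 𝕜) • v 1 = 0 := by
      rw [hc, one_smul, neg_smul]; abel
    have h2 := Fintype.linearIndependent_iff.mp hv
      (fun i => if i = 0 then -c else 1)
      (by simpa [Fin.sum_univ_two] using hz) 1
    simp at h2
  refine ⟨e, ((‖w‖ : 𝕜))⁻¹ • w, hne, ?_, ?_⟩
  · rw [norm_smul, norm_inv, RCLike.norm_ofReal, abs_norm]
    exact inv_mul_cancel₀ (norm_ne_zero_iff.mpr hwne)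
  · rw [inner_smul_right, hiw, mul_zero]

end aux

section eval

variable {n : ℕ} {H : Type*} [NormedAddCommGroup H]

/-- One-point evaluation. -/
lemma my_eval1 (a : Finset (Fin n) → ℝ) (i : Fin n) (u : H) :
    ∑ B ∈ (Finset.univ : Finset (Finset (Fin n))).filter
        (fun B => 1 ≤ B.card ∧ B.card ≤ 2),
      a B * ‖∑ k ∈ B, (if k = i then u else 0)‖ ^ 2
    = (∑ B ∈ (Finset.univ : Finset (Finset (Fin n))).filter
        (fun B => (1 ≤ B.card ∧ B.card ≤ 2) ∧ i ∈ B), a B) * ‖u‖ ^ 2 := by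
  have key : ∀ B : Finset (Fin n),
      a B * ‖∑ k ∈ B, (if k = i then u else 0)‖ ^ 2
      = (if i ∈ B then a B else 0) * ‖u‖ ^ 2 := by
    intro B
    rw [Finset.sum_ite_eq' B i (fun _ => u)]
    split <;> simp
  rw [Finset.sum_congr rfl (fun B _ => key B), ← Finset.sum_mul]
  congr 1
  rw [← Finset.sum_filter, Finset.filter_filter]

/-- Two-point evaluation. -/
lemma my_eval2 (a : Finset (Fin n) → ℝ) (i j : Fin n) (hij : i ≠ j) (u v : H) :
    ∑ B ∈ (Finset.univ : Finset (Finset (Fin n))).filter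
        (fun B => 1 ≤ B.card ∧ B.card ≤ 2),
      a B * ‖∑ k ∈ B, (if k = i then u else if k = j then v else 0)‖ ^ 2
    = (∑ B ∈ (Finset.univ : Finset (Finset (Fin n))).filter
          (fun B => (1 ≤ B.card ∧ B.card ≤ 2) ∧ i ∈ B ∧ j ∉ B), a B) * ‖u‖ ^ 2
      + (∑ B ∈ (Finset.univ : Finset (Finset (Fin n))).filter
          (fun B => (1 ≤ B.card ∧ B.card ≤ 2) ∧ j ∈ B ∧ i ∉ B), a B) * ‖v‖ ^ 2
      + a {i, j} * ‖u + v‖ ^ 2 := by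
  have hsum : ∀ B : Finset (Fin n),
      ∑ k ∈ B, (if k = i then u else if k = j then v else 0)
      = (if i ∈ B then u else 0) + (if j ∈ B then v else 0) := by
    intro B
    have : ∀ k ∈ B, (if k = i then u else if k = j then v else 0)
        = (if k = i then u else 0) + (if k = j then v else 0) := by
      intro k _
      rcases eq_or_ne k i with rfl | hki
      · simp [hij]
      · simp [hki]
    rw [Finset.sum_congr rfl this, Finset.sum_add_distrib,
      Finset.sum_ite_eq' B i (fun _ => u), Finset.sum_ite_eq' B j (fun _ => v)]
  have key : ∀ B : Finset (Fin n),
      a B * ‖∑ k ∈ B, (if k = i then u else if k = j then v else 0)‖ ^ 2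
      = (if i ∈ B ∧ j ∉ B then a B else 0) * ‖u‖ ^ 2
        + (if j ∈ B ∧ i ∉ B then a B else 0) * ‖v‖ ^ 2
        + (if i ∈ B ∧ j ∈ B then a B else 0) * ‖u + v‖ ^ 2 := by
    intro B
    rw [hsum B]
    by_cases hi : i ∈ B <;> by_cases hj : j ∈ B <;> simp [hi, hj]
  rw [Finset.sum_congr rfl (fun B _ => key B), Finset.sum_add_distrib,
    Finset.sum_add_distrib, ← Finset.sum_mul, ← Finset.sum_mul, ← Finset.sum_mul,
    ← Finset.sum_filter, ← Finset.sum_filter, ← Finset.sum_filter,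
    Finset.filter_filter, Finset.filter_filter, Finset.filter_filter]
  congr 2
  have hfil : (Finset.univ : Finset (Finset (Fin n))).filter
      (fun B => (1 ≤ B.card ∧ B.card ≤ 2) ∧ i ∈ B ∧ j ∈ B) = {({i, j} : Finset (Fin n))} := by
    ext B
    simp only [Finset.mem_filter, Finset.mem_univ, true_and, Finset.mem_singleton]
    constructor
    · rintro ⟨⟨-, hc2⟩, hi, hj⟩
      have hsub : ({i, j} : Finset (Fin n)) ⊆ B := by
        intro k hk
        simp only [Finset.mem_insert, Finset.mem_singleton] at hk
        rcases hk with rfl | rfl <;> assumption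
      have hcij : ({i, j} : Finset (Fin n)).card = 2 := Finset.card_pair hij
      exact (Finset.eq_of_subset_of_card_le hsub (by omega)).symm
    · rintro rfl
      refine ⟨⟨?_, ?_⟩, ?_, ?_⟩ <;> simp [Finset.card_pair hij]
  rw [hfil, Finset.sum_singleton]
end eval

theorem stmt1 {𝕜 H : Type*} [RCLike 𝕜] [NormedAddCommGroup H] [InnerProductSpace 𝕜 H]
    (hdim : 2 ≤ Module.rank 𝕜 H) (n : ℕ) (hn : 1 ≤ n)
    (a : Finset (Fin n) → ℝ) :
    (∀ x : Fin n → H,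
        ∑ B ∈ (Finset.univ : Finset (Finset (Fin n))).filter
            (fun B => 1 ≤ B.card ∧ B.card ≤ 2),
          a B * ‖∑ i ∈ B, x i‖ ^ 2 = 0) ↔
      ∀ B : Finset (Fin n), 1 ≤ B.card → B.card ≤ 2 → a B = 0 := by
  constructor
  · intro h
    obtain ⟨e, f, hne, hnf, hef⟩ := my_exists_orthonormal_pair (𝕜 := 𝕜) (H := H) hdim
    -- first: all pairs vanish
    have hpair : ∀ B : Finset (Fin n), B.card = 2 → a B = 0 := by
      intro B hB
      obtain ⟨i, j, hij, rfl⟩ := Finset.card_eq_two.mp hB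
      -- test with (e, -e)
      have h1 := h (fun k => if k = i then e else if k = j then (-e) else 0)
      rw [my_eval2 a i j hij e (-e)] at h1
      -- test with (e, f)
      have h2 := h (fun k => if k = i then e else if k = j then f else 0)
      rw [my_eval2 a i j hij e f] at h2
      have hee : ‖e + -e‖ = 0 := by simp
      have hefn : ‖e + f‖ ^ 2 = 2 := by
        rw [@norm_add_sq 𝕜, hef, hne, hnf]
        norm_num
      rw [hee, hne] at h1
      rw [hefn, hne, hnf] at h2
      simp only [norm_neg, hne] at h1
      nlinarith [h1, h2]
    intro B h1c h2c
    rcases (by omega : B.card = 1 ∨ B.card = 2) with hc | hc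
    · obtain ⟨i, rfl⟩ := Finset.card_eq_one.mp hc
      have h1 := h (fun k => if k = i then e else 0)
      rw [my_eval1 a i e, hne] at h1
      have hsum : (∑ B ∈ (Finset.univ : Finset (Finset (Fin n))).filter
          (fun B => (1 ≤ B.card ∧ B.card ≤ 2) ∧ i ∈ B), a B) = a {i} := by
        apply Finset.sum_eq_single_of_mem
        · simp
        · intro B hB hBne
          simp only [Finset.mem_filter, Finset.mem_univ, true_and] at hB
          obtain ⟨⟨hb1, hb2⟩, hbi⟩ := hB
          rcases (by omega : B.card = 1 ∨ B.card = 2) with hc' | hc'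
          · obtain ⟨j, rfl⟩ := Finset.card_eq_one.mp hc'
            simp only [Finset.mem_singleton] at hbi
            exact absurd (by rw [hbi]) hBne
          · exact hpair B hc'
      rw [hsum] at h1
      nlinarith [h1]
    · exact hpair B hc
  · intro h x
    apply Finset.sum_eq_zero
    intro B hB
    simp only [Finset.mem_filter, Finset.mem_univ, true_and] at hB
    rw [h B hB.1 hB.2, zero_mul]
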